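/- (Factorial Schur Fehér–Némethi–Rimányi identity, the β = 0 case.) Let 0 ≤ k ≤ n and m ≥ k be integers, and let λ = (λ_1 ≥ ⋯ ≥ λ_k ≥ 0) be a partition with λ_1 ≤ m − k. Set μ = (m−k, …, m−k, λ_1, …, λ_k), the partition with n parts whose first n−k parts equal m−k followed by the parts of λ. Then s_μ(x_1,…,x_n|y) = Σ_{S ∈ binom([n],k)} s_λ(x_S|y) · (∏_{j∈S̄}(x_j|y)^m) / (∏_{i∈S}∏_{j∈S̄}(x_j − x_i)), where s_λ(x_S|y) is the factorial Schur polynomial in the k variables x_S. -/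
import Mathlib

/-- `(x|y)^j = (x + y_1)(x + y_2)⋯(x + y_j)`, with `(x|y)^0 = 1` (`y t` is `y_{t+1}`). -/
def facpow {F : Type*} [Field F] (y : ℕ → F) (x : F) (j : ℕ) : F :=
  ∏ t ∈ Finset.range j, (x + y t)

/-- The factorial Schur polynomial, given by the determinantal formula
`s_λ(x|y) = det((x_i|y)^{λ_j+n−j})_{1≤i,j≤n} / ∏_{i<j}(x_i − x_j)`. -/
noncomputable def facSchur {F : Type*} [Field F] (y : ℕ → F) {n : ℕ}
    (lam : Fin n → ℕ) (x : Fin n → F) : F :=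
  (Matrix.of fun i j : Fin n => facpow y (x i) (lam j + (n - 1 - (j : ℕ)))).det
    / ∏ i : Fin n, ∏ j ∈ Finset.Ioi i, (x i - x j)

open Finset Equiv Matrix Polynomial

namespace FNR


variable {F : Type*} [Field F]

/-- double-product form of the Vandermonde-type product `∏_{i<j} (v i - v j)`. -/
def vanIf {N : ℕ} (v : Fin N → F) : F :=
  ∏ i : Fin N, ∏ j : Fin N, if i < j then v i - v j else 1

lemma vanIf_eq_Ioi {N : ℕ} (v : Fin N → F) :
    vanIf v = ∏ i : Fin N, ∏ j ∈ Finset.Ioi i, (v i - v j) := by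
  unfold vanIf
  refine Finset.prod_congr rfl fun i _ => ?_
  rw [Finset.prod_ite, Finset.prod_const_one, mul_one]
  congr 1
  ext j
  simp [Finset.mem_filter, Finset.mem_Ioi]

lemma detVdm_eq {N : ℕ} (v : Fin N → F) :
    (Matrix.vandermonde v).det = ∏ i : Fin N, ∏ j : Fin N, if i < j then v j - v i else 1 := by
  rw [Matrix.det_vandermonde]
  refine Finset.prod_congr rfl fun i _ => ?_
  rw [Finset.prod_ite, Finset.prod_const_one, mul_one]
  congr 1
  ext j
  simp [Finset.mem_filter, Finset.mem_Ioi]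

lemma vanIf_eq_sign_mul {N : ℕ} (v : Fin N → F) :
    vanIf v = (∏ i : Fin N, ∏ j : Fin N, if i < j then (-1 : F) else 1) *
      (Matrix.vandermonde v).det := by
  rw [detVdm_eq, vanIf, ← Finset.prod_mul_distrib]
  refine Finset.prod_congr rfl fun i _ => ?_
  rw [← Finset.prod_mul_distrib]
  refine Finset.prod_congr rfl fun j _ => ?_
  split_ifs
  · ring
  · ring

lemma vanIf_comp_perm {N : ℕ} (v : Fin N → F) (ρ : Equiv.Perm (Fin N)) :
    vanIf (v ∘ ρ) = ((Equiv.Perm.sign ρ : ℤ) : F) * vanIf v := by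
  have h1 : Matrix.vandermonde (v ∘ ρ) = (Matrix.vandermonde v).submatrix ρ id := by
    ext i j; rfl
  rw [vanIf_eq_sign_mul, vanIf_eq_sign_mul, h1, Matrix.det_permute]
  push_cast
  ring

lemma vanIf_ne_zero {N : ℕ} {v : Fin N → F} (hv : Function.Injective v) : vanIf v ≠ 0 := by
  unfold vanIf
  rw [Finset.prod_ne_zero_iff]
  intro i _
  rw [Finset.prod_ne_zero_iff]
  intro j _
  split_ifs with h
  · exact sub_ne_zero.mpr (fun e => (ne_of_lt h) (hv e))
  · exact one_ne_zero

/-- descending-degree monic polynomial Vandermonde determinant -/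
lemma det_desc_monic {N : ℕ} (v : Fin N → F) (p : Fin N → F[X])
    (hdeg : ∀ j, (p j).natDegree = N - 1 - (j : ℕ)) (hm : ∀ j, (p j).Monic) :
    (Matrix.of fun i j : Fin N => (p j).eval (v i)).det = vanIf v := by
  have h1 : (Matrix.of fun i j : Fin N => (p j).eval (v i)).det
      = ((Matrix.of fun i j : Fin N => (p j).eval (v i)).submatrix
          (Fin.revPerm : Equiv.Perm (Fin N)) (Fin.revPerm : Equiv.Perm (Fin N))).det := by
    rw [Matrix.det_submatrix_equiv_self]
  have h2 : ((Matrix.of fun i j : Fin N => (p j).eval (v i)).submatrix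
          (Fin.revPerm : Equiv.Perm (Fin N)) (Fin.revPerm : Equiv.Perm (Fin N)))
      = (Matrix.of fun i j : Fin N => ((p ∘ Fin.rev) j).eval ((v ∘ Fin.rev) i)) := by
    ext i j; rfl
  have hdeg' : ∀ j : Fin N, ((p ∘ Fin.rev) j).natDegree = (j : ℕ) := by
    intro j
    rw [Function.comp_apply, hdeg]
    have := j.isLt
    simp [Fin.rev]
    omega
  have h3 := (Matrix.det_eval_matrixOfPolynomials_eq_det_vandermonde (v ∘ Fin.rev)
      (p ∘ Fin.rev) hdeg' (fun j => hm _)).symm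
  rw [h1, h2, h3, Matrix.det_vandermonde]
  -- now: ∏ i, ∏ j ∈ Ioi i, ((v ∘ rev) j - (v ∘ rev) i) = vanIf v
  have h4 : ∀ i : Fin N, (∏ j ∈ Finset.Ioi i, ((v ∘ Fin.rev) j - (v ∘ Fin.rev) i))
      = ∏ j : Fin N, if i < j then v (Fin.rev j) - v (Fin.rev i) else 1 := by
    intro i
    rw [Finset.prod_ite, Finset.prod_const_one, mul_one]
    congr 1
    ext j
    simp [Finset.mem_filter, Finset.mem_Ioi]
  simp_rw [h4]
  have swap2 : ∀ g : Fin N → Fin N → F,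
      (∏ i : Fin N, ∏ j : Fin N, g i j) = ∏ i : Fin N, ∏ j : Fin N, g (Fin.rev i) (Fin.rev j) := by
    intro g
    symm
    calc ∏ i : Fin N, ∏ j : Fin N, g (Fin.rev i) (Fin.rev j)
        = ∏ i : Fin N, ∏ j : Fin N, g i (Fin.rev j) :=
          Equiv.prod_comp Fin.revPerm (fun a => ∏ j : Fin N, g a (Fin.rev j))
      _ = ∏ i : Fin N, ∏ j : Fin N, g i j :=
          Finset.prod_congr rfl fun i _ => Equiv.prod_comp Fin.revPerm (g i)
  rw [swap2 (fun i j => if i < j then v (Fin.rev j) - v (Fin.rev i) else 1)]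
  simp only [Fin.rev_rev, Fin.rev_lt_rev]
  rw [Finset.prod_comm]
  unfold vanIf
  rfl
lemma vanIf_split {p q n : ℕ} (h : p + q = n) (w : Fin n → F) :
    vanIf w = vanIf (fun a : Fin p => w (finCongr h (Fin.castAdd q a)))
      * vanIf (fun b : Fin q => w (finCongr h (Fin.natAdd p b)))
      * ∏ a : Fin p, ∏ b : Fin q,
          (w (finCongr h (Fin.castAdd q a)) - w (finCongr h (Fin.natAdd p b))) := by
  set e : Fin p ⊕ Fin q ≃ Fin n := finSumFinEquiv.trans (finCongr h) with he
  have key : ∀ s : Fin p ⊕ Fin q, ∀ t : Fin p ⊕ Fin q,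
      (e s < e t) ↔ (match s, t with
        | Sum.inl a, Sum.inl b => a < b
        | Sum.inl _, Sum.inr _ => True
        | Sum.inr _, Sum.inl _ => False
        | Sum.inr a, Sum.inr b => a < b) := by
    have hval : ∀ s : Fin p ⊕ Fin q, ((e s : Fin n) : ℕ)
        = Sum.elim (fun a : Fin p => (a : ℕ)) (fun b : Fin q => p + (b : ℕ)) s := by
      rintro (a | b) <;> simp [he]
    rintro (a | a) (b | b) <;>
      simp only [Fin.lt_def, hval, Sum.elim_inl, Sum.elim_inr] <;>
      constructor <;> intro hh <;> first | omega | trivial | exact hh | exact Fin.lt_def.mp hh | exact Fin.lt_def.mpr hh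
  unfold vanIf
  rw [← Equiv.prod_comp e (fun i => ∏ j : Fin n, if i < j then w i - w j else 1)]
  have inner : ∀ s : Fin p ⊕ Fin q,
      (∏ j : Fin n, if e s < j then w (e s) - w j else 1)
        = ∏ t : Fin p ⊕ Fin q, if e s < e t then w (e s) - w (e t) else 1 :=
    fun s => (Equiv.prod_comp e (fun j => if e s < j then w (e s) - w j else 1)).symm
  simp_rw [inner]
  rw [Fintype.prod_sum_type]
  have hll : ∀ a b : Fin p, (e (Sum.inl a) < e (Sum.inl b)) = (a < b) :=
    fun a b => propext (key (Sum.inl a) (Sum.inl b))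
  have hlr : ∀ (a : Fin p) (b : Fin q), (e (Sum.inl a) < e (Sum.inr b)) = True :=
    fun a b => propext (key (Sum.inl a) (Sum.inr b))
  have hrl : ∀ (a : Fin q) (b : Fin p), (e (Sum.inr a) < e (Sum.inl b)) = False :=
    fun a b => propext (key (Sum.inr a) (Sum.inl b))
  have hrr : ∀ a b : Fin q, (e (Sum.inr a) < e (Sum.inr b)) = (a < b) :=
    fun a b => propext (key (Sum.inr a) (Sum.inr b))
  have hel : ∀ a : Fin p, e (Sum.inl a) = finCongr h (Fin.castAdd q a) := fun a => by simp [he]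
  have her : ∀ b : Fin q, e (Sum.inr b) = finCongr h (Fin.natAdd p b) := fun b => by simp [he]
  simp only [Fintype.prod_sum_type, hll, hlr, hrl, hrr, if_true, if_false,
    Finset.prod_const_one, one_mul, mul_one, Finset.prod_mul_distrib]
  simp only [hel, her]
  ring


section Ring
variable {R : Type*} [CommRing R] {n k : ℕ}
def eqv (hkn : k ≤ n) : (Fin (n - k) ⊕ Fin k) ≃ Fin n :=
  finSumFinEquiv.trans (finCongr (by omega))

lemma card_compl_eq (hkn : k ≤ n) {S : Finset (Fin n)} (hS : S.card = k) :
    Sᶜ.card = n - k := by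
  rw [Finset.card_compl, hS]; simp

def bperm (hkn : k ≤ n) (S : Finset (Fin n)) (hS : S.card = k) : Equiv.Perm (Fin n) :=
  (eqv hkn).symm.trans
    ((Equiv.sumCongr
        ((Sᶜ.orderIsoOfFin (card_compl_eq hkn hS)).toEquiv.trans
          (Equiv.subtypeEquivRight (fun x => Finset.mem_compl)))
        (S.orderIsoOfFin hS).toEquiv).trans
      ((Equiv.sumComm _ _).trans (Equiv.sumCompl (· ∈ S))))

@[simp] lemma bperm_inl (hkn : k ≤ n) {S : Finset (Fin n)} (hS : S.card = k) (a : Fin (n - k)) :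
    bperm hkn S hS (eqv hkn (Sum.inl a)) = (Sᶜ.orderIsoOfFin (card_compl_eq hkn hS) a : Fin n) := by
  simp [bperm]

@[simp] lemma bperm_inr (hkn : k ≤ n) {S : Finset (Fin n)} (hS : S.card = k) (b : Fin k) :
    bperm hkn S hS (eqv hkn (Sum.inr b)) = (S.orderIsoOfFin hS b : Fin n) := by
  simp [bperm]


def phi (hkn : k ≤ n) (t : Σ _ : {S : Finset (Fin n) // S.card = k},
    Equiv.Perm (Fin (n - k)) × Equiv.Perm (Fin k)) : Equiv.Perm (Fin n) :=
  (bperm hkn t.1.1 t.1.2) * ((eqv hkn).permCongr (Equiv.sumCongr t.2.1 t.2.2))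

lemma phi_apply_inr (hkn : k ≤ n) (t) (b : Fin k) :
    phi hkn t (eqv hkn (Sum.inr b)) = (t.1.1.orderIsoOfFin t.1.2 (t.2.2 b) : Fin n) := by
  simp [phi, Equiv.Perm.mul_apply, Equiv.permCongr_apply]

lemma phi_apply_inl (hkn : k ≤ n) (t) (a : Fin (n - k)) :
    phi hkn t (eqv hkn (Sum.inl a))
      = ((t.1.1ᶜ).orderIsoOfFin (card_compl_eq hkn t.1.2) (t.2.1 a) : Fin n) := by
  simp [phi, Equiv.Perm.mul_apply, Equiv.permCongr_apply]

lemma phi_image (hkn : k ≤ n) (t) :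
    Finset.image (fun b : Fin k => phi hkn t (eqv hkn (Sum.inr b))) Finset.univ = t.1.1 := by
  ext j
  simp only [Finset.mem_image, Finset.mem_univ, true_and, phi_apply_inr]
  constructor
  · rintro ⟨b, rfl⟩
    exact (t.1.1.orderIsoOfFin t.1.2 (t.2.2 b)).2
  · intro hj
    exact ⟨t.2.2.symm ((t.1.1.orderIsoOfFin t.1.2).symm ⟨j, hj⟩), by simp⟩

lemma phi_bijective (hkn : k ≤ n) : Function.Bijective (phi hkn) := by
  rw [Fintype.bijective_iff_injective_and_card]
  constructor
  · intro t t' hphi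
    obtain ⟨⟨S, hS⟩, τ₁, τ₂⟩ := t
    obtain ⟨⟨S', hS'⟩, τ₁', τ₂'⟩ := t'
    have hSS : S = S' := by
      have h1 := phi_image hkn ⟨⟨S, hS⟩, τ₁, τ₂⟩
      have h2 := phi_image hkn ⟨⟨S', hS'⟩, τ₁', τ₂'⟩
      simp only [] at h1 h2
      rw [← h1, ← h2, hphi]
    subst hSS
    have hSh : hS = hS' := rfl
    subst hSh
    have hmul : (eqv hkn).permCongr (Equiv.sumCongr τ₁ τ₂)
        = (eqv hkn).permCongr (Equiv.sumCongr τ₁' τ₂') :=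
      mul_left_cancel (a := bperm hkn S hS) hphi
    have hsum : Equiv.sumCongr τ₁ τ₂ = Equiv.sumCongr τ₁' τ₂' :=
      (Equiv.permCongr (eqv hkn)).injective hmul
    have h1 : τ₁ = τ₁' := by
      ext a
      have := congrArg (fun e => e (Sum.inl a)) (congrArg Equiv.toFun hsum)
      simp only [Equiv.toFun_as_coe, Equiv.sumCongr_apply, Sum.map_inl] at this
      exact congrArg Fin.val (Sum.inl.inj this)
    have h2 : τ₂ = τ₂' := by
      ext b
      have := congrArg (fun e => e (Sum.inr b)) (congrArg Equiv.toFun hsum)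
      simp only [Equiv.toFun_as_coe, Equiv.sumCongr_apply, Sum.map_inr] at this
      exact congrArg Fin.val (Sum.inr.inj this)
    simp [h1, h2]
  · rw [Fintype.card_sigma]
    simp only [Fintype.card_prod, Fintype.card_perm, Fintype.card_fin, Finset.sum_const,
      Fintype.card_finset_len, smul_eq_mul]
    have : #(Finset.univ : Finset {S : Finset (Fin n) // #S = k}) = n.choose k := by
      rw [Finset.card_univ, Fintype.card_finset_len, Fintype.card_fin]
    rw [this]
    have := Nat.choose_mul_factorial_mul_factorial hkn
    calc n.choose k * ((n - k).factorial * k.factorial)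
        = n.choose k * k.factorial * (n - k).factorial := by ring
      _ = n.factorial := this


theorem laplace (hkn : k ≤ n) (M : Matrix (Fin n) (Fin n) R) :
    M.det = ∑ S : {S : Finset (Fin n) // #S = k},
      ((Equiv.Perm.sign (bperm hkn S.1 S.2) : ℤ) : R)
        * (Matrix.of fun a j : Fin (n - k) =>
            M ((S.1ᶜ).orderIsoOfFin (card_compl_eq hkn S.2) a) (eqv hkn (Sum.inl j))).det
        * (Matrix.of fun b t : Fin k =>
            M (S.1.orderIsoOfFin S.2 b) (eqv hkn (Sum.inr t))).det := by
  rw [Matrix.det_apply']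
  rw [← Fintype.sum_bijective (phi hkn) (phi_bijective hkn)
    (fun t => ((Equiv.Perm.sign (phi hkn t) : ℤ) : R) * ∏ i, M (phi hkn t i) i)
    (fun σ => ((Equiv.Perm.sign σ : ℤ) : R) * ∏ i, M (σ i) i) (fun t => rfl)]
  rw [← Finset.univ_sigma_univ, Finset.sum_sigma]
  refine Finset.sum_congr rfl fun S _ => ?_
  rw [Fintype.sum_prod_type]
  -- per-term rewriting
  have hterm : ∀ τ₁ : Equiv.Perm (Fin (n - k)), ∀ τ₂ : Equiv.Perm (Fin k),
      ((Equiv.Perm.sign (phi hkn ⟨S, τ₁, τ₂⟩) : ℤ) : R) * ∏ i, M (phi hkn ⟨S, τ₁, τ₂⟩ i) i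
      = ((Equiv.Perm.sign (bperm hkn S.1 S.2) : ℤ) : R)
        * (((Equiv.Perm.sign τ₁ : ℤ) : R) *
            ∏ a, M ((S.1ᶜ).orderIsoOfFin (card_compl_eq hkn S.2) (τ₁ a)) (eqv hkn (Sum.inl a)))
        * (((Equiv.Perm.sign τ₂ : ℤ) : R) *
            ∏ b, M (S.1.orderIsoOfFin S.2 (τ₂ b)) (eqv hkn (Sum.inr b))) := by
    intro τ₁ τ₂
    have hsign : Equiv.Perm.sign (phi hkn ⟨S, τ₁, τ₂⟩)
        = Equiv.Perm.sign (bperm hkn S.1 S.2) * (Equiv.Perm.sign τ₁ * Equiv.Perm.sign τ₂) := by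
      unfold phi
      rw [Equiv.Perm.sign_mul, Equiv.Perm.sign_permCongr, Equiv.Perm.sign_sumCongr]
    have hprod : (∏ i, M (phi hkn ⟨S, τ₁, τ₂⟩ i) i)
        = (∏ a, M ((S.1ᶜ).orderIsoOfFin (card_compl_eq hkn S.2) (τ₁ a)) (eqv hkn (Sum.inl a)))
          * ∏ b, M (S.1.orderIsoOfFin S.2 (τ₂ b)) (eqv hkn (Sum.inr b)) := by
      rw [← Equiv.prod_comp (eqv hkn) (fun i => M (phi hkn ⟨S, τ₁, τ₂⟩ i) i)]
      rw [Fintype.prod_sum_type]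
      congr 1
      · exact Finset.prod_congr rfl fun a _ => by rw [phi_apply_inl]
      · exact Finset.prod_congr rfl fun b _ => by rw [phi_apply_inr]
    rw [hsign, hprod]
    push_cast
    ring
  simp_rw [hterm]
  rw [Matrix.det_apply', Matrix.det_apply', mul_assoc, Finset.sum_mul_sum, Finset.mul_sum]
  refine Finset.sum_congr rfl fun τ₁ _ => ?_
  rw [Finset.mul_sum]
  refine Finset.sum_congr rfl fun τ₂ _ => ?_
  simp only [Matrix.of_apply]
  ring


end Ring
end FNR

/-- Fehér–Némethi–Rimányi identity for factorial Schur polynomials (the `β = 0` case):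
with `μ = (m−k,…,m−k,λ_1,…,λ_k)` (`m−k` repeated `n−k` times),
`s_μ(x|y) = Σ_{S ∈ binom([n],k)} s_λ(x_S|y) ∏_{j∈S̄}(x_j|y)^m / ∏_{i∈S}∏_{j∈S̄}(x_j−x_i)`. -/
theorem stmt16 {F : Type*} [Field F] (y : ℕ → F) (n k m : ℕ)
    (hkn : k ≤ n) (hkm : k ≤ m)
    (x : Fin n → F) (hx : Function.Injective x)
    (lam : Fin k → ℕ) (hlam : Antitone lam) (hlam1 : ∀ i, lam i ≤ m - k) :
    facSchur y (fun i : Fin n =>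
        if h : (i : ℕ) < n - k then m - k
        else lam ⟨(i : ℕ) - (n - k), by have := i.isLt; omega⟩) x
      = ∑ S : {S : Finset (Fin n) // S.card = k},
          facSchur y lam (fun i : Fin k => x ((S.1.orderIsoOfFin S.2 i : Fin n)))
            * ((∏ j ∈ S.1ᶜ, facpow y (x j) m) / ∏ i ∈ S.1, ∏ j ∈ S.1ᶜ, (x j - x i)) := by
  classical
  have hnk : n - k + k = n := by omega
  set mu : Fin n → ℕ := (fun i : Fin n =>
      if h : (i : ℕ) < n - k then m - k
      else lam ⟨(i : ℕ) - (n - k), by have := i.isLt; omega⟩) with hmu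
  set M : Matrix (Fin n) (Fin n) F :=
    Matrix.of (fun i j : Fin n => facpow y (x i) (mu j + (n - 1 - (j : ℕ)))) with hM
  have hvx : FNR.vanIf x ≠ 0 := FNR.vanIf_ne_zero hx
  show M.det / (∏ i : Fin n, ∏ j ∈ Finset.Ioi i, (x i - x j)) = _
  rw [← FNR.vanIf_eq_Ioi, FNR.laplace hkn M, div_eq_iff hvx, Finset.sum_mul]
  refine Finset.sum_congr rfl fun S _ => ?_
  -- notation
  set φ₁ := (S.1ᶜ).orderIsoOfFin (FNR.card_compl_eq hkn S.2) with hφ₁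
  set φ₂ := S.1.orderIsoOfFin S.2 with hφ₂
  set vbar : Fin (n - k) → F := fun a => x (φ₁ a) with hvbar
  set vS : Fin k → F := fun b => x (φ₂ b) with hvS
  have hvbarinj : Function.Injective vbar := by
    intro a b hab
    exact φ₁.injective (Subtype.ext (hx hab))
  have hvSinj : Function.Injective vS := by
    intro a b hab
    exact φ₂.injective (Subtype.ext (hx hab))
  have hval_l : ∀ j : Fin (n - k), ((FNR.eqv hkn (Sum.inl j) : Fin n) : ℕ) = (j : ℕ) := by
    intro j; simp [FNR.eqv]
  have hval_r : ∀ t : Fin k, ((FNR.eqv hkn (Sum.inr t) : Fin n) : ℕ) = (n - k) + (t : ℕ) := by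
    intro t; simp [FNR.eqv]
  -- Step a : determinant of the A block
  set Pp : Fin (n - k) → Polynomial F :=
    fun j => ∏ t ∈ Finset.range (n - k - 1 - (j : ℕ)), (Polynomial.X + Polynomial.C (y (m + t)))
    with hPp
  have hAentry : ∀ (a j : Fin (n - k)),
      M (φ₁ a) (FNR.eqv hkn (Sum.inl j))
        = facpow y (vbar a) m * (Pp j).eval (vbar a) := by
    intro a j
    have hj := j.isLt
    have hcond : ((FNR.eqv hkn (Sum.inl j) : Fin n) : ℕ) < n - k := by
      rw [hval_l]; exact hj
    have hmuval : mu (FNR.eqv hkn (Sum.inl j)) = m - k := by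
      rw [hmu]; exact dif_pos hcond
    have hexp : mu (FNR.eqv hkn (Sum.inl j)) + (n - 1 - ((FNR.eqv hkn (Sum.inl j) : Fin n) : ℕ))
        = m + (n - k - 1 - (j : ℕ)) := by
      rw [hmuval, hval_l]; omega
    have heval : (Pp j).eval (vbar a)
        = ∏ t ∈ Finset.range (n - k - 1 - (j : ℕ)), (vbar a + y (m + t)) := by
      rw [hPp]
      simp [Polynomial.eval_prod]
    rw [hM, Matrix.of_apply, hexp, heval, facpow, facpow, Finset.prod_range_add]
  have hdetA : (Matrix.of fun a j : Fin (n - k) =>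
        M (φ₁ a) (FNR.eqv hkn (Sum.inl j))).det
      = (∏ a : Fin (n - k), facpow y (vbar a) m) * FNR.vanIf vbar := by
    have h1 : (Matrix.of fun a j : Fin (n - k) => M (φ₁ a) (FNR.eqv hkn (Sum.inl j)))
        = Matrix.of (fun a j : Fin (n - k) => (fun i => facpow y (vbar i) m) a *
            (Matrix.of fun a j : Fin (n - k) => (Pp j).eval (vbar a)) a j) := by
      ext a j
      exact hAentry a j
    rw [h1, Matrix.det_mul_column]
    congr 1
    refine FNR.det_desc_monic vbar Pp (fun j => ?_) (fun j => ?_)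
    · rw [hPp]
      rw [Polynomial.natDegree_prod_of_monic _ _ (fun t _ => Polynomial.monic_X_add_C _)]
      simp
    · exact Polynomial.monic_prod_of_monic _ _ (fun t _ => Polynomial.monic_X_add_C _)
  -- Step b : determinant of the B block
  have hBentry : ∀ (b t : Fin k),
      M (φ₂ b) (FNR.eqv hkn (Sum.inr t))
        = facpow y (vS b) (lam t + (k - 1 - (t : ℕ))) := by
    intro b t
    have ht := t.isLt
    have hcond : ¬ (((FNR.eqv hkn (Sum.inr t) : Fin n) : ℕ) < n - k) := by
      rw [hval_r]; omega
    have hmuval : mu (FNR.eqv hkn (Sum.inr t)) = lam t := by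
      have h2 : ((FNR.eqv hkn (Sum.inr t) : Fin n) : ℕ) - (n - k) = (t : ℕ) := by
        rw [hval_r]; omega
      simp only [hmu]
      rw [dif_neg hcond]
      congr 1
      exact Fin.ext h2
    have hexp : mu (FNR.eqv hkn (Sum.inr t)) + (n - 1 - ((FNR.eqv hkn (Sum.inr t) : Fin n) : ℕ))
        = lam t + (k - 1 - (t : ℕ)) := by
      rw [hmuval, hval_r]
      omega
    rw [hM, Matrix.of_apply, hexp]
  have hvvS : FNR.vanIf vS ≠ 0 := FNR.vanIf_ne_zero hvSinj
  have hdetB : (Matrix.of fun b t : Fin k =>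
        M (φ₂ b) (FNR.eqv hkn (Sum.inr t))).det
      = facSchur y lam vS * FNR.vanIf vS := by
    have h1 : (Matrix.of fun b t : Fin k => M (φ₂ b) (FNR.eqv hkn (Sum.inr t)))
        = Matrix.of (fun b t : Fin k => facpow y (vS b) (lam t + (k - 1 - (t : ℕ)))) := by
      ext b t
      exact hBentry b t
    rw [h1]
    rw [show facSchur y lam vS
      = (Matrix.of fun b t : Fin k => facpow y (vS b) (lam t + (k - 1 - (t : ℕ)))).det
        / FNR.vanIf vS from by rw [facSchur, FNR.vanIf_eq_Ioi]]
    rw [div_mul_cancel₀ _ hvvS]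
  -- Step c : the Vandermonde factorisation
  set Q : F := ∏ i ∈ S.1, ∏ j ∈ S.1ᶜ, (x j - x i) with hQdef
  have hQ : Q ≠ 0 := by
    rw [hQdef, Finset.prod_ne_zero_iff]
    intro i hi
    rw [Finset.prod_ne_zero_iff]
    intro j hj
    rw [Finset.mem_compl] at hj
    exact sub_ne_zero.mpr (fun e => hj (by rwa [hx e]))
  have hkey : ((Equiv.Perm.sign (FNR.bperm hkn S.1 S.2) : ℤ) : F) * FNR.vanIf x
      = FNR.vanIf vbar * FNR.vanIf vS * Q := by
    rw [← FNR.vanIf_comp_perm x (FNR.bperm hkn S.1 S.2)]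
    rw [FNR.vanIf_split hnk (x ∘ (FNR.bperm hkn S.1 S.2))]
    have hca : ∀ a : Fin (n - k),
        (x ∘ (FNR.bperm hkn S.1 S.2)) (finCongr hnk (Fin.castAdd k a)) = vbar a := by
      intro a
      have h3 : (finCongr hnk (Fin.castAdd k a)) = FNR.eqv hkn (Sum.inl a) := by
        simp [FNR.eqv]
      rw [Function.comp_apply, h3, FNR.bperm_inl]
    have hcb : ∀ b : Fin k,
        (x ∘ (FNR.bperm hkn S.1 S.2)) (finCongr hnk (Fin.natAdd (n - k) b)) = vS b := by
      intro b
      have h3 : (finCongr hnk (Fin.natAdd (n - k) b)) = FNR.eqv hkn (Sum.inr b) := by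
        simp [FNR.eqv]
      rw [Function.comp_apply, h3, FNR.bperm_inr]
    simp_rw [hca, hcb]
    congr 1
    rw [hQdef, Finset.prod_comm]
    rw [← Finset.prod_coe_sort S.1 (fun i => ∏ j ∈ S.1ᶜ, (x j - x i))]
    rw [← Equiv.prod_comp φ₂.toEquiv (fun u => ∏ j ∈ S.1ᶜ, (x j - x (u : Fin n)))]
    refine Finset.prod_congr rfl fun b _ => ?_
    rw [← Finset.prod_coe_sort S.1ᶜ (fun j => (x j - x (φ₂.toEquiv b)))]
    rw [← Equiv.prod_comp φ₁.toEquiv (fun u => (x (u : Fin n) - x (φ₂.toEquiv b)))]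
    rfl
  -- Step d : sign squared
  have hsgn2 : ((Equiv.Perm.sign (FNR.bperm hkn S.1 S.2) : ℤ) : F)
      * ((Equiv.Perm.sign (FNR.bperm hkn S.1 S.2) : ℤ) : F) = 1 := by
    rcases Int.units_eq_one_or (Equiv.Perm.sign (FNR.bperm hkn S.1 S.2)) with h | h <;>
      rw [h] <;> norm_num
  -- Step e : final algebra
  have hP : (∏ a : Fin (n - k), facpow y (vbar a) m) = ∏ j ∈ S.1ᶜ, facpow y (x j) m := by
    rw [← Finset.prod_coe_sort S.1ᶜ (fun j => facpow y (x j) m)]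
    exact Equiv.prod_comp φ₁.toEquiv (fun u => facpow y (x (u : Fin n)) m)
  rw [hdetA, hdetB, hP]
  set sg : F := ((Equiv.Perm.sign (FNR.bperm hkn S.1 S.2) : ℤ) : F) with hsg
  set P : F := ∏ j ∈ S.1ᶜ, facpow y (x j) m with hPs
  set fs : F := facSchur y lam vS with hfs
  -- goal : sg * (P * vanIf vbar) * (fs * vanIf vS) = fs * (P / Q) * vanIf x
  have hvv : FNR.vanIf vbar * FNR.vanIf vS = sg * FNR.vanIf x / Q := by
    rw [eq_div_iff hQ, ← hkey]
  calc sg * (P * FNR.vanIf vbar) * (fs * FNR.vanIf vS)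
      = sg * P * fs * (FNR.vanIf vbar * FNR.vanIf vS) := by ring
    _ = sg * P * fs * (sg * FNR.vanIf x / Q) := by rw [hvv]
    _ = (sg * sg) * (fs * (P / Q) * FNR.vanIf x) := by ring
    _ = fs * (P / Q) * FNR.vanIf x := by rw [hsgn2, one_mul]
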